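/- Let G be a group, H ≤ G a subgroup, x, g ∈ G, and B a finite subset of G containing 1, with N = |B|. Suppose that for every positive integer m with x⁻¹·gᵐ ∈ H there exist elements y₀, y₁, …, y_m ∈ B with y_m = 1 and x⁻¹·gⁱ·yᵢ ∈ H for all 0 ≤ i ≤ m. Then if there exists some positive integer m with x⁻¹·gᵐ ∈ H, there exists a positive integer n with n ≤ N and x⁻¹·gⁿ ∈ H. -/
import Mathlib


/-- Pigeonhole bound for power coset membership: if every witness `x⁻¹gᵐ ∈ H` is
accompanied by elements `yᵢ` of a fixed finite set `B` (with `y_m = 1`) such that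
`x⁻¹gⁱyᵢ ∈ H` for all `i ≤ m`, then some positive power `n ≤ |B|` already satisfies
`x⁻¹gⁿ ∈ H`. -/
theorem power_coset_pigeonhole (G : Type*) [Group G] (H : Subgroup G)
    (x g : G) (B : Finset G) (hB1 : (1 : G) ∈ B)
    (hyp : ∀ m : ℕ, 0 < m → x⁻¹ * g ^ m ∈ H →
      ∃ y : ℕ → G, (∀ i ≤ m, y i ∈ B) ∧ y m = 1 ∧ ∀ i ≤ m, x⁻¹ * g ^ i * y i ∈ H)
    (hex : ∃ m : ℕ, 0 < m ∧ x⁻¹ * g ^ m ∈ H) :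
    ∃ n : ℕ, 0 < n ∧ n ≤ B.card ∧ x⁻¹ * g ^ n ∈ H := by
  classical
  let P : ℕ → Prop := fun m => 0 < m ∧ x⁻¹ * g ^ m ∈ H
  have hexP : ∃ m, P m := hex
  let m := Nat.find hexP
  have hm : P m := Nat.find_spec hexP
  obtain ⟨hmpos, hmH⟩ := hm
  refine ⟨m, hmpos, ?_, hmH⟩
  by_contra hcard
  push_neg at hcard
  obtain ⟨y, hyB, hym, hyH⟩ := hyp m hmpos hmH
  -- pigeonhole on indices 1..m
  have hmaps : ∀ a ∈ Finset.Icc 1 m, y a ∈ B := by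
    intro a ha
    exact hyB a (Finset.mem_Icc.mp ha).2
  have hlt : B.card < (Finset.Icc 1 m).card := by
    rw [Nat.card_Icc]; omega
  obtain ⟨i, hi, j, hj, hij, hyij⟩ :=
    Finset.exists_ne_map_eq_of_card_lt_of_maps_to hlt hmaps
  rw [Finset.mem_Icc] at hi hj
  -- WLOG i < j
  wlog hlt' : i < j generalizing i j
  · exact this j hj i hi hij.symm hyij.symm (by omega)
  -- construct shorter witness n = m + i - j
  set n := m + i - j with hn
  have hnpos : 0 < n := by omega
  have hnlt : n < m := by omega
  have hprod : (x⁻¹ * g ^ i * y i) * (x⁻¹ * g ^ j * y j)⁻¹ * (x⁻¹ * g ^ m)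
      = x⁻¹ * g ^ n := by
    rw [hyij]
    have hpow : g ^ i * (g ^ j)⁻¹ * g ^ m = g ^ n := by
      rw [← zpow_natCast g i, ← zpow_natCast g j, ← zpow_natCast g m, ← zpow_natCast g n,
        ← zpow_neg, ← zpow_add, ← zpow_add]
      congr 1
      omega
    calc (x⁻¹ * g ^ i * y j) * (x⁻¹ * g ^ j * y j)⁻¹ * (x⁻¹ * g ^ m)
        = x⁻¹ * (g ^ i * (g ^ j)⁻¹ * g ^ m) := by group
      _ = x⁻¹ * g ^ n := by rw [hpow]
  have hnH : x⁻¹ * g ^ n ∈ H := by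
    rw [← hprod]
    exact H.mul_mem (H.mul_mem (hyH i hi.2) (H.inv_mem (hyH j hj.2))) hmH
  exact absurd ⟨hnpos, hnH⟩ (Nat.find_min hexP hnlt)
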